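/- Let k be a product formula field. For every nonzero homogeneous polynomial P ∈ k[p_0,p_1] of degree d ≥ 1 with factorization P = ∏_{j=1}^d ((p_0,p_1) ∧ q_j^P) over k̄, and for each place v of k, set M^#(P)_v := Σ_{j=1}^d log‖q_j^P‖_v. Then the sum Σ_{v ∈ M_k} N_v · M^#(P)_v is a finite nonnegative real number. -/

import Mathlib

open MvPolynomial Classical

section GaussAux

variable {K : Type*} [Field K] (w : AbsoluteValue K ℝ)

/-- Gauss norm of a polynomial w.r.t. an absolute value. -/
noncomputable def gn (w : AbsoluteValue K ℝ) (f : Polynomial K) : NNReal :=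
  f.support.sup fun i => (w (f.coeff i)).toNNReal

lemma coeff_le_gn (f : Polynomial K) (i : ℕ) :
    (w (f.coeff i)).toNNReal ≤ gn w f := by
  by_cases h : i ∈ f.support
  · exact Finset.le_sup (f := fun i => (w (f.coeff i)).toNNReal) h
  · rw [Polynomial.notMem_support_iff.mp h]; simp

lemma coeff_le_gn' (f : Polynomial K) (i : ℕ) :
    w (f.coeff i) ≤ (gn w f : ℝ) := by
  have h := coeff_le_gn w f i
  calc w (f.coeff i) = ((w (f.coeff i)).toNNReal : ℝ) :=
        (Real.coe_toNNReal _ (w.nonneg _)).symm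
    _ ≤ _ := by exact_mod_cast h

lemma gn_pos (f : Polynomial K) (hf : f ≠ 0) : 0 < gn w f := by
  have hmem : f.natDegree ∈ f.support := Polynomial.natDegree_mem_support_of_nonzero hf
  have hpos : 0 < (w (f.coeff f.natDegree)).toNNReal :=
    Real.toNNReal_pos.mpr (w.pos (Polynomial.mem_support_iff.mp hmem))
  exact lt_of_lt_of_le hpos (Finset.le_sup (f := fun i => (w (f.coeff i)).toNNReal) hmem)

lemma na_sub (hw : ∀ x y : K, w (x + y) ≤ max (w x) (w y)) (x y : K) :
    w (x - y) ≤ max (w x) (w y) := by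
  rw [sub_eq_add_neg]
  have := hw x (-y)
  rwa [w.map_neg] at this

lemma na_dom (hw : ∀ x y : K, w (x + y) ≤ max (w x) (w y)) {x y : K}
    (h : w y < w x) : w (x + y) = w x := by
  refine le_antisymm ((hw x y).trans (max_le le_rfl h.le)) ?_
  by_contra hlt
  push_neg at hlt
  have h2 : w x = w ((x + y) + (-y)) := by rw [add_neg_cancel_right]
  have h3 : w ((x + y) + (-y)) ≤ max (w (x + y)) (w (-y)) := hw _ _
  rw [w.map_neg] at h3
  have : w x < w x := lt_of_le_of_lt (h2 ▸ h3) (max_lt hlt h)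
  exact absurd this (lt_irrefl _)

end GaussAux
lemma linfac_ne_zero {K : Type*} [Field K] (a b : K) (hab : ¬(a = 0 ∧ b = 0)) :
    (Polynomial.C b * Polynomial.X - Polynomial.C a) ≠ 0 := by
  intro h
  have h1 : (Polynomial.C b * Polynomial.X - Polynomial.C a).coeff 1 = b := by
    simp [Polynomial.coeff_sub, Polynomial.coeff_C]
  have h0 : (Polynomial.C b * Polynomial.X - Polynomial.C a).coeff 0 = -a := by
    simp [Polynomial.coeff_sub, Polynomial.coeff_C]
  rw [h] at h1 h0
  simp only [Polynomial.coeff_zero] at h1 h0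
  exact hab ⟨neg_eq_zero.mp h0.symm, h1.symm⟩

section GaussAux2
variable {K : Type*} [Field K] (w : AbsoluteValue K ℝ)

lemma gn_linear_mul (hw : ∀ x y : K, w (x + y) ≤ max (w x) (w y))
    (a b : K) (hab : ¬(a = 0 ∧ b = 0)) (f : Polynomial K) (hf : f ≠ 0) :
    gn w ((Polynomial.C b * Polynomial.X - Polynomial.C a) * f)
      = (max (w a) (w b)).toNNReal * gn w f := by
  set g : Polynomial K := (Polynomial.C b * Polynomial.X - Polynomial.C a) * f with hg
  set M : ℝ := max (w a) (w b) with hM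
  have hM0 : 0 ≤ M := le_trans (w.nonneg a) (le_max_left _ _)
  have hMpos : 0 < M := by
    rcases (not_and_or.mp hab) with h | h
    · exact lt_of_lt_of_le (w.pos h) (le_max_left _ _)
    · exact lt_of_lt_of_le (w.pos h) (le_max_right _ _)
  have hgnf : (0:ℝ) < (gn w f : ℝ) := by exact_mod_cast gn_pos w f hf
  have hrep : g = Polynomial.C b * (Polynomial.X * f) - Polynomial.C a * f := by
    rw [hg]; ring
  have hg0 : g.coeff 0 = -(a * f.coeff 0) := by
    rw [hrep]
    simp [Polynomial.coeff_sub, Polynomial.coeff_C_mul, Polynomial.mul_coeff_zero]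
  have hgS : ∀ i : ℕ, g.coeff (i + 1) = b * f.coeff i - a * f.coeff (i + 1) := by
    intro i
    rw [hrep]
    simp [Polynomial.coeff_sub, Polynomial.coeff_C_mul, Polynomial.coeff_X_mul]
  -- upper bound on all coefficients
  have hb : ∀ i : ℕ, w (g.coeff i) ≤ M * (gn w f : ℝ) := by
    intro i
    have haM : w a ≤ M := le_max_left _ _
    have hbM : w b ≤ M := le_max_right _ _
    cases i with
    | zero =>
        rw [hg0, w.map_neg, w.map_mul]
        exact mul_le_mul haM (coeff_le_gn' w f 0) (w.nonneg _) hM0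
    | succ i =>
        rw [hgS i]
        refine le_trans (na_sub w hw _ _) (max_le ?_ ?_)
        · rw [w.map_mul]
          exact mul_le_mul hbM (coeff_le_gn' w f i) (w.nonneg _) hM0
        · rw [w.map_mul]
          exact mul_le_mul haM (coeff_le_gn' w f (i+1)) (w.nonneg _) hM0
  -- there is a coefficient achieving the bound
  have hexists : ∃ i : ℕ, w (g.coeff i) = M * (gn w f : ℝ) := by
    rcases le_or_gt (w a) (w b) with hle | hlt
    · -- M = w b, b ≠ 0
      have hMb : M = w b := max_eq_right hle
      have hbne : b ≠ 0 := by
        intro hb0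
        rcases not_and_or.mp hab with h | h
        · rw [hb0, w.map_zero] at hle
          exact h (w.eq_zero.mp (le_antisymm hle (w.nonneg a)))
        · exact h hb0
      set s : Finset ℕ := f.support.filter
        (fun i => (w (f.coeff i)).toNNReal = gn w f) with hs
      have hsne : s.Nonempty := by
        obtain ⟨i, hi, hival⟩ := Finset.exists_mem_eq_sup f.support
          (Polynomial.nonempty_support_iff.mpr hf)
          (fun i => (w (f.coeff i)).toNNReal)
        exact ⟨i, Finset.mem_filter.mpr ⟨hi, hival.symm⟩⟩
      set i₀ : ℕ := s.max' hsne with hi₀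
      have hi₀mem := s.max'_mem hsne
      have hval : w (f.coeff i₀) = (gn w f : ℝ) := by
        have := (Finset.mem_filter.mp hi₀mem).2
        calc w (f.coeff i₀) = ((w (f.coeff i₀)).toNNReal : ℝ) :=
              (Real.coe_toNNReal _ (w.nonneg _)).symm
          _ = _ := by exact_mod_cast this
      have hnext : w (f.coeff (i₀ + 1)) < (gn w f : ℝ) := by
        by_cases hz : f.coeff (i₀ + 1) = 0
        · rw [hz, w.map_zero]; exact hgnf
        · rcases lt_or_eq_of_le (coeff_le_gn w f (i₀ + 1)) with h | h
          · calc w (f.coeff (i₀+1)) = ((w (f.coeff (i₀+1))).toNNReal : ℝ) :=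
                  (Real.coe_toNNReal _ (w.nonneg _)).symm
              _ < _ := by exact_mod_cast h
          · exfalso
            have : i₀ + 1 ∈ s := Finset.mem_filter.mpr
              ⟨Polynomial.mem_support_iff.mpr hz, h⟩
            have := Finset.le_max' s _ this
            omega
      refine ⟨i₀ + 1, ?_⟩
      have hdom : w (-(a * f.coeff (i₀ + 1))) < w (b * f.coeff i₀) := by
        rw [w.map_neg, w.map_mul, w.map_mul, hval]
        calc w a * w (f.coeff (i₀+1)) ≤ w b * w (f.coeff (i₀+1)) :=
              mul_le_mul_of_nonneg_right hle (w.nonneg _)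
          _ < w b * (gn w f : ℝ) := by
              exact mul_lt_mul_of_pos_left hnext (w.pos hbne)
      have : g.coeff (i₀ + 1) = b * f.coeff i₀ + -(a * f.coeff (i₀ + 1)) := by
        rw [hgS]; ring
      rw [this, na_dom w hw hdom, w.map_mul, hval, hMb]
    · -- M = w a, a ≠ 0
      have hMa : M = w a := max_eq_left hlt.le
      have hane : a ≠ 0 := by
        intro ha0
        rw [ha0, w.map_zero] at hlt
        exact absurd (lt_of_le_of_lt (w.nonneg b) hlt) (lt_irrefl _)
      obtain ⟨i₀, hi₀, hival⟩ := Finset.exists_mem_eq_sup f.support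
        (Polynomial.nonempty_support_iff.mpr hf)
        (fun i => (w (f.coeff i)).toNNReal)
      have hval : w (f.coeff i₀) = (gn w f : ℝ) := by
        calc w (f.coeff i₀) = ((w (f.coeff i₀)).toNNReal : ℝ) :=
              (Real.coe_toNNReal _ (w.nonneg _)).symm
          _ = _ := by exact_mod_cast hival.symm
      cases i₀ with
      | zero =>
          refine ⟨0, ?_⟩
          rw [hg0, w.map_neg, w.map_mul, hval, hMa]
      | succ i =>
          refine ⟨i + 1, ?_⟩
          have hdom : w (b * f.coeff i) < w (-(a * f.coeff (i + 1))) := by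
            rw [w.map_neg, w.map_mul, w.map_mul, hval]
            calc w b * w (f.coeff i) ≤ w b * (gn w f : ℝ) :=
                  mul_le_mul_of_nonneg_left (coeff_le_gn' w f i) (w.nonneg _)
              _ < w a * (gn w f : ℝ) := mul_lt_mul_of_pos_right hlt hgnf
          have : g.coeff (i + 1) = -(a * f.coeff (i + 1)) + b * f.coeff i := by
            rw [hgS]; ring
          rw [this, na_dom w hw hdom, w.map_neg, w.map_mul, hval, hMa]
  -- combine
  obtain ⟨i, hi⟩ := hexists
  refine le_antisymm ?_ ?_
  · refine Finset.sup_le fun j _ => ?_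
    have : M.toNNReal * gn w f = (M * (gn w f : ℝ)).toNNReal := by
      rw [Real.toNNReal_mul hM0, Real.toNNReal_coe]
    rw [this]
    exact Real.toNNReal_le_toNNReal (hb j)
  · have h1 : M.toNNReal * gn w f = (w (g.coeff i)).toNNReal := by
      rw [hi, Real.toNNReal_mul hM0, Real.toNNReal_coe]
    rw [h1]
    exact coeff_le_gn w g i

lemma gn_one : gn w (1 : Polynomial K) = 1 := by
  have hsupp : (1 : Polynomial K).support = {0} := by
    rw [← Polynomial.C_1, Polynomial.support_C one_ne_zero]
  rw [gn, hsupp]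
  simp [Polynomial.coeff_one]

lemma gn_prod {ι : Type*} (hw : ∀ x y : K, w (x + y) ≤ max (w x) (w y))
    (s : Finset ι) (A B : ι → K) (hab : ∀ j ∈ s, ¬(A j = 0 ∧ B j = 0)) :
    gn w (∏ j ∈ s, (Polynomial.C (B j) * Polynomial.X - Polynomial.C (A j)))
      = ∏ j ∈ s, (max (w (A j)) (w (B j))).toNNReal := by
  induction s using Finset.cons_induction with
  | empty => simpa using gn_one w
  | cons j s hj ih =>
      rw [Finset.prod_cons, Finset.prod_cons]
      have hrest : (∏ i ∈ s, (Polynomial.C (B i) * Polynomial.X - Polynomial.C (A i))) ≠ 0 := by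
        rw [Finset.prod_ne_zero_iff]
        exact fun i hi => linfac_ne_zero _ _ (hab i (Finset.mem_cons_of_mem hi))
      rw [gn_linear_mul w hw _ _ (hab j (Finset.mem_cons_self j s)) _ hrest,
        ih (fun i hi => hab i (Finset.mem_cons_of_mem hi))]
end GaussAux2

/-- A product formula field: a field equipped with places (represented by non-trivial
absolute values, with multiplicities `N v`) satisfying the product formula. -/
structure PlaceData (k : Type*) [Field k] where
  ι : Type
  N : ι → ℕ
  Npos : ∀ v, 0 < N v
  abv : ι → AbsoluteValue k ℝ
  nontrivial' : ∀ v, ∃ x : k, x ≠ 0 ∧ abv v x ≠ 1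
  finiteSupport : ∀ x : k, x ≠ 0 → {v | abv v x ≠ 1}.Finite
  productFormula : ∀ x : k, x ≠ 0 → (∏ᶠ v, abv v x ^ N v) = 1

/-- Let `k` be a product formula field, `P ∈ k[p₀,p₁]` homogeneous of
degree `d ≥ 1`, factored over the algebraic closure `K` as `P = ∏_j ((p₀,p₁) ∧ q_j)`.
For each place `v` set `M^#(P)_v := Σ_j log‖q_j‖_v`, where `‖·‖_v` is the max norm at
non-archimedean places and the Euclidean norm at the (finitely many) archimedean places,
computed with a fixed extension of `|·|_v` to `K`. Then `Σ_v N_v · M^#(P)_v` is a finite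
nonnegative real number. -/
theorem stmt5 (k : Type*) [Field k] (pd : PlaceData k)
    (K : Type*) [Field K] [Algebra k K] [IsAlgClosure k K]
    (abvK : pd.ι → AbsoluteValue K ℝ)
    (hext : ∀ v (x : k), abvK v (algebraMap k K x) = pd.abv v x)
    (nonarch : pd.ι → Prop)
    (harchfin : {v | ¬ nonarch v}.Finite)
    (hna : ∀ v, nonarch v → ∀ x y : K, abvK v (x + y) ≤ max (abvK v x) (abvK v y))
    (nrm : pd.ι → K × K → ℝ)
    (hnrm : ∀ v p, nrm v p =
      if nonarch v then max (abvK v p.1) (abvK v p.2)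
      else Real.sqrt (abvK v p.1 ^ 2 + abvK v p.2 ^ 2))
    (d : ℕ) (hd : 1 ≤ d)
    (P : MvPolynomial (Fin 2) k) (hP : P ≠ 0) (hhom : P.IsHomogeneous d)
    (q : Fin d → K × K) (hq : ∀ j, q j ≠ 0)
    (hfact : P.map (algebraMap k K) =
      ∏ j : Fin d, (X 0 * C (q j).2 - X 1 * C (q j).1)) :
    Summable (fun v => (pd.N v : ℝ) * ∑ j : Fin d, Real.log (nrm v (q j))) ∧
      0 ≤ ∑' v, (pd.N v : ℝ) * ∑ j : Fin d, Real.log (nrm v (q j)) := by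
  classical
  set a : Fin d → K := fun j => (q j).1 with ha
  set b : Fin d → K := fun j => (q j).2 with hb
  have hab : ∀ j, ¬(a j = 0 ∧ b j = 0) := by
    intro j h
    exact hq j (Prod.ext h.1 h.2)
  set p : Polynomial K :=
    ∏ j : Fin d, (Polynomial.C (b j) * Polynomial.X - Polynomial.C (a j)) with hp
  set pk : Polynomial k :=
    MvPolynomial.eval₂ Polynomial.C ![Polynomial.X, 1] P with hpkdef
  -- the dehomogenization identity
  have hpk : pk.map (algebraMap k K) = p := by
    have h1 : pk.map (algebraMap k K)
        = MvPolynomial.eval₂ Polynomial.C ![Polynomial.X, 1]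
            (MvPolynomial.map (algebraMap k K) P) := by
      rw [MvPolynomial.eval₂_map]
      have h2 := MvPolynomial.eval₂_comp_left
        (Polynomial.mapRingHom (algebraMap k K))
        (Polynomial.C : k →+* Polynomial k) ![Polynomial.X, 1] P
      rw [hpkdef]
      show Polynomial.mapRingHom (algebraMap k K) (MvPolynomial.eval₂ _ _ P) = _
      rw [h2]
      congr 1
      · ext x
        simp
      · funext i
        fin_cases i <;> simp
    rw [h1, hfact]
    rw [show (MvPolynomial.eval₂ (Polynomial.C : K →+* Polynomial K)
        ![Polynomial.X, 1]
        (∏ j : Fin d, (X 0 * C (q j).2 - X 1 * C (q j).1)))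
      = (MvPolynomial.eval₂Hom (Polynomial.C : K →+* Polynomial K)
        ![Polynomial.X, 1])
        (∏ j : Fin d, (X 0 * C (q j).2 - X 1 * C (q j).1)) from rfl]
    rw [map_prod, hp]
    refine Finset.prod_congr rfl fun j _ => ?_
    simp only [map_sub, map_mul, MvPolynomial.eval₂Hom_X', MvPolynomial.eval₂Hom_C]
    simp [Matrix.cons_val_zero, Matrix.cons_val_one]
    try ring
  have hpne : p ≠ 0 := by
    rw [hp, Finset.prod_ne_zero_iff]
    exact fun j _ => linfac_ne_zero _ _ (hab j)
  have hpkne : pk ≠ 0 := by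
    intro h
    rw [h, Polynomial.map_zero] at hpk
    exact hpne hpk.symm
  set c : k := pk.leadingCoeff with hcdef
  have hc : c ≠ 0 := Polynomial.leadingCoeff_ne_zero.mpr hpkne
  have hcmap : algebraMap k K c = p.leadingCoeff := by
    rw [← hpk, Polynomial.leadingCoeff_map]
  -- max norm bounded by nrm
  have hmaxle : ∀ v (z : K × K),
      max (abvK v z.1) (abvK v z.2) ≤ nrm v z := by
    intro v z
    rw [hnrm]
    split_ifs with h
    · exact le_rfl
    · refine max_le ?_ ?_
      · rw [Real.le_sqrt ((abvK v).nonneg _) (by positivity)]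
        nlinarith [sq_nonneg (abvK v z.2)]
      · rw [Real.le_sqrt ((abvK v).nonneg _) (by positivity)]
        nlinarith [sq_nonneg (abvK v z.1)]
  have hmaxpos : ∀ v (j : Fin d), 0 < max (abvK v (a j)) (abvK v (b j)) := by
    intro v j
    rcases not_and_or.mp (hab j) with h | h
    · exact lt_of_lt_of_le ((abvK v).pos h) (le_max_left _ _)
    · exact lt_of_lt_of_le ((abvK v).pos h) (le_max_right _ _)
  have hnrmpos : ∀ v (j : Fin d), 0 < nrm v (q j) := by
    intro v j
    exact lt_of_lt_of_le (hmaxpos v j) (hmaxle v (q j))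
  -- |c|_v is bounded by the product of the norms of the q_j
  have hcb : ∀ v, pd.abv v c ≤ ∏ j : Fin d, nrm v (q j) := by
    intro v
    rw [← hext v c, hcmap, hp, Polynomial.leadingCoeff_prod, map_prod]
    refine Finset.prod_le_prod (fun j _ => (abvK v).nonneg _) fun j _ => ?_
    by_cases hbj : b j = 0
    · have : (Polynomial.C (b j) * Polynomial.X
          - Polynomial.C (a j)).leadingCoeff = -(a j) := by
        rw [hbj]
        simp
      rw [this, (abvK v).map_neg]
      exact le_trans (le_max_left _ _) (hmaxle v (q j))
    · have : (Polynomial.C (b j) * Polynomial.X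
          - Polynomial.C (a j)).leadingCoeff = b j := by
        rw [sub_eq_add_neg, ← Polynomial.C_neg]
        exact Polynomial.leadingCoeff_linear hbj
      rw [this]
      exact le_trans (le_max_right _ _) (hmaxle v (q j))
  -- termwise comparison
  have hterm : ∀ v, (pd.N v : ℝ) * Real.log (pd.abv v c)
      ≤ (pd.N v : ℝ) * ∑ j : Fin d, Real.log (nrm v (q j)) := by
    intro v
    refine mul_le_mul_of_nonneg_left ?_ (Nat.cast_nonneg _)
    rw [← Real.log_prod (fun j _ => (hnrmpos v j).ne')]
    exact Real.log_le_log ((pd.abv v).pos hc) (hcb v)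
  -- coefficients of p come from pk
  have hcoeffmap : ∀ i, p.coeff i = algebraMap k K (pk.coeff i) := by
    intro i
    rw [← hpk, Polynomial.coeff_map]
  -- the bad set
  set S : Set pd.ι := {v | ¬ nonarch v} ∪
    ⋃ i ∈ (pk.support : Set ℕ), {v | pd.abv v (pk.coeff i) ≠ 1} with hS
  have hSfin : S.Finite := by
    refine harchfin.union (Set.Finite.biUnion pk.support.finite_toSet fun i hi => ?_)
    exact pd.finiteSupport _ (Polynomial.mem_support_iff.mp (by exact_mod_cast hi))
  -- outside the bad set the terms vanish
  have hvanish : ∀ v ∉ hSfin.toFinset,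
      (pd.N v : ℝ) * ∑ j : Fin d, Real.log (nrm v (q j)) = 0 := by
    intro v hv
    rw [Set.Finite.mem_toFinset, hS, Set.mem_union, not_or] at hv
    obtain ⟨hv1, hv2⟩ := hv
    have hv1' : nonarch v := not_not.mp (by simpa using hv1)
    have hv2' : ∀ i ∈ pk.support, pd.abv v (pk.coeff i) = 1 := by
      intro i hi
      by_contra hne
      exact hv2 (Set.mem_biUnion (by exact_mod_cast hi) hne)
    -- Gauss norm of p is 1
    have hgn1 : gn (abvK v) p = 1 := by
      have hmemiff : ∀ i, i ∈ p.support ↔ i ∈ pk.support := by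
        intro i
        rw [Polynomial.mem_support_iff, Polynomial.mem_support_iff, hcoeffmap i]
        exact not_congr (map_eq_zero _)
      refine le_antisymm (Finset.sup_le fun i hi => ?_) ?_
      · rw [hcoeffmap i, hext, hv2' i ((hmemiff i).mp hi)]
        simp
      · have hmem : p.natDegree ∈ p.support :=
          Polynomial.natDegree_mem_support_of_nonzero hpne
        have : (abvK v (p.coeff p.natDegree)).toNNReal = 1 := by
          rw [hcoeffmap _, hext, hv2' _ ((hmemiff _).mp hmem)]
          simp
        calc (1 : NNReal) = (abvK v (p.coeff p.natDegree)).toNNReal := this.symm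
          _ ≤ gn (abvK v) p := coeff_le_gn _ p _
    -- Gauss's lemma
    have hgauss : gn (abvK v) p
        = ∏ j : Fin d, (max (abvK v (a j)) (abvK v (b j))).toNNReal := by
      rw [hp]
      exact gn_prod (abvK v) (hna v hv1') Finset.univ a b (fun j _ => hab j)
    have hprod1 : ∏ j : Fin d, max (abvK v (a j)) (abvK v (b j)) = 1 := by
      have h1 : (∏ j : Fin d, (max (abvK v (a j)) (abvK v (b j))).toNNReal)
          = (1 : NNReal) := by rw [← hgauss, hgn1]
      have h2 := congrArg (fun x : NNReal => (x : ℝ)) h1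
      simp only [NNReal.coe_prod, NNReal.coe_one] at h2
      rw [← h2]
      exact Finset.prod_congr rfl fun j _ =>
        (Real.coe_toNNReal _ (hmaxpos v j).le).symm
    have hlog : ∑ j : Fin d, Real.log (nrm v (q j)) = 0 := by
      have : ∀ j : Fin d, nrm v (q j) = max (abvK v (a j)) (abvK v (b j)) := by
        intro j
        rw [hnrm, if_pos hv1']
      rw [Finset.sum_congr rfl fun j _ => by rw [this j]]
      rw [← Real.log_prod (fun j _ => (hmaxpos v j).ne'), hprod1, Real.log_one]
    rw [hlog, mul_zero]
  have hsum : Summable (fun v => (pd.N v : ℝ) * ∑ j : Fin d, Real.log (nrm v (q j))) :=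
    summable_of_ne_finset_zero hvanish
  refine ⟨hsum, ?_⟩
  -- the comparison series
  set T : Finset pd.ι := (pd.finiteSupport c hc).toFinset with hT
  have hgz : ∀ v ∉ T, (pd.N v : ℝ) * Real.log (pd.abv v c) = 0 := by
    intro v hv
    rw [hT, Set.Finite.mem_toFinset] at hv
    have : pd.abv v c = 1 := not_not.mp (by simpa using hv)
    rw [this, Real.log_one, mul_zero]
  have hsumg : Summable (fun v => (pd.N v : ℝ) * Real.log (pd.abv v c)) :=
    summable_of_ne_finset_zero hgz
  have htsumg : ∑' v, (pd.N v : ℝ) * Real.log (pd.abv v c) = 0 := by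
    rw [tsum_eq_sum hgz]
    have h1 : ∀ v ∈ T, (pd.N v : ℝ) * Real.log (pd.abv v c)
        = Real.log (pd.abv v c ^ pd.N v) := by
      intro v _
      rw [Real.log_pow]
    rw [Finset.sum_congr rfl h1,
      ← Real.log_prod (fun v _ => pow_ne_zero _ ((pd.abv v).pos hc).ne')]
    have h2 : (∏ v ∈ T, pd.abv v c ^ pd.N v) = ∏ᶠ v, pd.abv v c ^ pd.N v := by
      refine (finprod_eq_prod_of_mulSupport_subset _ ?_).symm
      intro v hv
      rw [hT, Set.Finite.coe_toFinset]
      show pd.abv v c ≠ 1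
      intro h1v
      exact Function.mem_mulSupport.mp hv (by rw [h1v, one_pow])
    rw [h2, pd.productFormula c hc, Real.log_one]
  calc (0 : ℝ) = ∑' v, (pd.N v : ℝ) * Real.log (pd.abv v c) := htsumg.symm
    _ ≤ _ := Summable.tsum_le_tsum hterm hsumg hsum
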